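/- arXiv:1308.2364 — 7 statements merged into one kernel-verified Lean document; each statement's English description precedes it below -/
import Mathlib

section
/- Suppose A and B are finite nonempty subsets of a group with 1 ∈ A ∩ B. If the equation 1 = ab with a ∈ A and b ∈ B has no solution except a = b = 1, then |AB| ≥ |A| + |B| − 1, where AB = { ab : a ∈ A, b ∈ B }. -/
open scoped Pointwise

open Finset Function MulOpposite

namespace KempermanAux

variable {G : Type*} [Group G] [DecidableEq G]

/-- The relation we induct along (as in Mathlib's DeVos proof of Cauchy-Davenport). -/
private def KRel : Finset G × Finset G → Finset G × Finset G → Prop :=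
  Prod.Lex (· < ·) (Prod.Lex (· > ·) (· < ·)) on
    fun x ↦ ((x.1 * x.2).card, x.1.card + x.2.card, x.2.card)

private lemma kRel_iff {x y : Finset G × Finset G} :
    KRel x y ↔
      (x.1 * x.2).card < (y.1 * y.2).card ∨
        (x.1 * x.2).card = (y.1 * y.2).card ∧ y.1.card + y.2.card < x.1.card + x.2.card ∨
          (x.1 * x.2).card = (y.1 * y.2).card ∧ x.1.card + x.2.card = y.1.card + y.2.card ∧
            x.2.card < y.2.card := by
  simp [KRel, Prod.lex_iff, and_or_left]

private lemma wf_kRel :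
    {x : Finset G × Finset G | x.1.Nonempty ∧ x.2.Nonempty}.WellFoundedOn
      (KRel : Finset G × Finset G → Finset G × Finset G → Prop) := by
  refine wellFounded_lt.onFun.wellFoundedOn.prod_lex_of_wellFoundedOn_fiber fun n ↦
    Set.WellFoundedOn.prod_lex_of_wellFoundedOn_fiber ?_ fun n ↦
      wellFounded_lt.onFun.wellFoundedOn
  exact wellFounded_lt.onFun.wellFoundedOn.mono' fun x hx y _ ↦ tsub_lt_tsub_left_of_le <|
    add_le_add ((card_le_card_mul_right hx.1.2).trans_eq hx.2) <|
      (card_le_card_mul_left hx.1.1).trans_eq hx.2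

private lemma inv_sdiff (A B : Finset G) : A⁻¹ \ B⁻¹ = (A \ B)⁻¹ := by
  ext z; simp [mem_inv', mem_sdiff]

private lemma op_inv_smul_inv (g : G) (A : Finset G) : (op g⁻¹) • A⁻¹ = (g • A)⁻¹ := by
  ext z
  simp only [mem_smul_finset, mem_inv', op_smul_eq_mul, smul_eq_mul]
  constructor
  · rintro ⟨y, hy, rfl⟩
    exact ⟨y⁻¹, by simpa using hy, by group⟩
  · rintro ⟨w, hw, hwz⟩
    refine ⟨w⁻¹, by simpa using hw, ?_⟩
    rw [← inv_inv z, ← hwz]; group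

private lemma inv_smul_inv (g : G) (A : Finset G) : g⁻¹ • A⁻¹ = ((op g) • A)⁻¹ := by
  ext z
  simp only [mem_smul_finset, mem_inv', op_smul_eq_mul, smul_eq_mul]
  constructor
  · rintro ⟨y, hy, rfl⟩
    exact ⟨y⁻¹, by simpa using hy, by group⟩
  · rintro ⟨w, hw, hwz⟩
    refine ⟨w⁻¹, by simpa using hw, ?_⟩
    rw [← inv_inv z, ← hwz]; group

/-- The key transform step: all the facts about the pair `(s ∪ s·x, t ∩ x⁻¹·t)`. -/
private lemma step (s t : Finset G) (h1s : (1 : G) ∈ s) (h1t : (1 : G) ∈ t)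
    (h : ∀ a ∈ s, ∀ b ∈ t, a * b = 1 → a = 1 ∧ b = 1)
    (x : G) (hxs : x ∈ s) (hxt : x ∈ t) (hx1 : x ≠ 1) :
    (1 : G) ∈ s ∪ (op x) • s ∧ (1 : G) ∈ t ∩ x⁻¹ • t ∧
    (∀ a ∈ s ∪ (op x) • s, ∀ b ∈ t ∩ x⁻¹ • t, a * b = 1 → a = 1 ∧ b = 1) ∧
    (s ∪ (op x) • s) * (t ∩ x⁻¹ • t) ⊆ s * t ∧
    (t ∩ x⁻¹ • t).card < t.card ∧
    (s ∪ (op x) • s).card = s.card + ((op x) • s \ s).card ∧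
    t.card = (t ∩ x⁻¹ • t).card + (x • t \ t).card := by
  have hmemt' : ∀ b, b ∈ t ∩ x⁻¹ • t → b ∈ t ∧ x * b ∈ t := by
    intro b hb
    obtain ⟨hb1, hb2⟩ := mem_inter.1 hb
    obtain ⟨y, hy, hyx⟩ := mem_smul_finset.1 hb2
    refine ⟨hb1, ?_⟩
    have : x * b = y := by rw [← hyx, smul_eq_mul]; group
    rwa [this]
  refine ⟨mem_union_left _ h1s, ?_, ?_, ?_, ?_, ?_, ?_⟩
  · refine mem_inter.2 ⟨h1t, mem_smul_finset.2 ⟨x, hxt, by simp⟩⟩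
  · -- hypothesis preservation
    intro a ha b hb hab
    obtain ⟨hbt, hxbt⟩ := hmemt' b hb
    rcases mem_union.1 ha with ha' | ha'
    · exact h a ha' b hbt hab
    · obtain ⟨w, hw, hwx⟩ := mem_smul_finset.1 ha'
      rw [op_smul_eq_mul] at hwx
      have hw1 : w = 1 ∧ x * b = 1 := by
        refine h w hw (x * b) hxbt ?_
        rw [← mul_assoc, hwx]; exact hab
      exact absurd ((h x hxs b hbt hw1.2).1) hx1
  · -- product subset
    intro z hz
    obtain ⟨a, ha, b, hb, rfl⟩ := mem_mul.1 hz
    obtain ⟨hbt, hxbt⟩ := hmemt' b hb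
    rcases mem_union.1 ha with ha' | ha'
    · exact mul_mem_mul ha' hbt
    · obtain ⟨w, hw, hwx⟩ := mem_smul_finset.1 ha'
      rw [op_smul_eq_mul] at hwx
      have : a * b = w * (x * b) := by rw [← hwx]; group
      rw [this]
      exact mul_mem_mul hw hxbt
  · -- t strictly shrinks
    refine lt_of_le_of_ne (card_le_card inter_subset_left) fun hcard ↦ ?_
    have ht' : t ∩ x⁻¹ • t = t :=
      eq_of_subset_of_card_le inter_subset_left (le_of_eq hcard.symm)
    have hsub : t ⊆ x⁻¹ • t := fun b hb ↦ (mem_inter.1 (ht' ▸ hb)).2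
    have heq : t = x⁻¹ • t :=
      eq_of_subset_of_card_le hsub (le_of_eq (card_smul_finset x⁻¹ t))
    have hxinv : x⁻¹ ∈ t := by
      rw [heq]
      simpa using (smul_mem_smul_finset h1t : x⁻¹ • (1 : G) ∈ x⁻¹ • t)
    exact hx1 (h x hxs x⁻¹ hxinv (mul_inv_cancel x)).1
  · -- card of union
    rw [union_comm, ← card_sdiff_add_card]
    ring
  · -- card of inter
    have h1 : (t ∩ x⁻¹ • t).card + (t \ x⁻¹ • t).card = t.card := card_inter_add_card_sdiff _ _
    have h2 : (x • t \ t).card = (t \ x⁻¹ • t).card := by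
      have : x • (t \ x⁻¹ • t) = x • t \ t := by
        rw [smul_finset_sdiff, smul_inv_smul]
      rw [← this, card_smul_finset]
    omega

private lemma key : ∀ y : Finset G × Finset G, (1 : G) ∈ y.1 → (1 : G) ∈ y.2 →
    (∀ a ∈ y.1, ∀ b ∈ y.2, a * b = 1 → a = 1 ∧ b = 1) →
    y.1.card + y.2.card - 1 ≤ (y.1 * y.2).card := by
  intro y h1s h1t h
  refine Set.WellFoundedOn.induction wf_kRel (x := y)
    ⟨⟨1, h1s⟩, ⟨1, h1t⟩⟩ (P := fun z : Finset G × Finset G ↦ (1 : G) ∈ z.1 → (1 : G) ∈ z.2 →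
      (∀ a ∈ z.1, ∀ b ∈ z.2, a * b = 1 → a = 1 ∧ b = 1) →
      z.1.card + z.2.card - 1 ≤ (z.1 * z.2).card) ?_ h1s h1t h
  clear! y
  rintro ⟨s, t⟩ - ih h1s h1t h
  change s.card + t.card - 1 ≤ (s * t).card
  by_cases hst : s ∩ t = {1}
  · -- base case: A ∪ B ⊆ A * B does the job
    have hsub : s ∪ t ⊆ s * t := by
      refine union_subset (fun a ha ↦ ?_) (fun b hb ↦ ?_)
      · simpa using mul_mem_mul ha h1t
      · simpa using mul_mem_mul h1s hb
    have h1 : (s ∪ t).card + (s ∩ t).card = s.card + t.card := card_union_add_card_inter _ _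
    have h2 : (s ∩ t).card = 1 := by rw [hst]; simp
    have := card_le_card hsub
    omega
  · -- get a nontrivial common element x
    obtain ⟨x, hx, hx1⟩ : ∃ x ∈ s ∩ t, x ≠ 1 := by
      by_contra hc
      push_neg at hc
      refine hst (Finset.Subset.antisymm (fun z hz ↦ ?_) (fun z hz ↦ ?_))
      · simp [hc z hz]
      · simpa [mem_singleton.1 hz] using mem_inter.2 ⟨h1s, h1t⟩
    obtain ⟨hxs, hxt⟩ := mem_inter.1 hx
    set u := ((op x) • s \ s).card with hu
    set v := (x • t \ t).card with hv
    rcases le_or_gt v u with huv | huv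
    · -- Case A: direct transform
      obtain ⟨k1, k2, k3, k4, k5, k6, k7⟩ := step s t h1s h1t h x hxs hxt hx1
      set s' := s ∪ (op x) • s with hs'
      set t' := t ∩ x⁻¹ • t with ht'
      have hPle : (s' * t').card ≤ (s * t).card := card_le_card k4
      have hrel : KRel (s', t') (s, t) := by
        rw [kRel_iff]
        rcases lt_or_eq_of_le hPle with hlt | heq
        · exact Or.inl hlt
        · rcases lt_or_eq_of_le (show s.card + t.card ≤ s'.card + t'.card by omega) with h2 | h2
          · exact Or.inr (Or.inl ⟨heq, h2⟩)
          · exact Or.inr (Or.inr ⟨heq, h2.symm, k5⟩)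
      have hkey : s'.card + t'.card - 1 ≤ (s' * t').card :=
        ih (s', t') ⟨⟨1, k1⟩, ⟨1, k2⟩⟩ hrel k1 k2 k3
      omega
    · -- Case B: transform the inverted pair (t⁻¹, s⁻¹) with x⁻¹
      have h1S : (1 : G) ∈ t⁻¹ := by simp [mem_inv', h1t]
      have h1T : (1 : G) ∈ s⁻¹ := by simp [mem_inv', h1s]
      have hinv : ∀ a ∈ t⁻¹, ∀ b ∈ s⁻¹, a * b = 1 → a = 1 ∧ b = 1 := by
        intro a ha b hb hab
        rw [mem_inv'] at ha hb
        have : b⁻¹ * a⁻¹ = 1 := by rw [← mul_inv_rev, hab]; simp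
        obtain ⟨e1, e2⟩ := h b⁻¹ hb a⁻¹ ha this
        constructor
        · simpa using congrArg (·⁻¹) e2
        · simpa using congrArg (·⁻¹) e1
      obtain ⟨k1, k2, k3, k4, k5, k6, k7⟩ := step t⁻¹ s⁻¹ h1S h1T hinv x⁻¹
        (by simp [mem_inv', hxt]) (by simp [mem_inv', hxs]) (by simpa using hx1)
      set S' := t⁻¹ ∪ (op x⁻¹) • t⁻¹ with hS'
      set T' := s⁻¹ ∩ (x⁻¹)⁻¹ • s⁻¹ with hT'
      -- translate cardinalities
      have huB : ((op x⁻¹) • t⁻¹ \ t⁻¹).card = v := by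
        rw [op_inv_smul_inv, inv_sdiff, card_inv]
      have hvB : ((x⁻¹ • s⁻¹) \ s⁻¹).card = u := by
        rw [inv_smul_inv, inv_sdiff, card_inv]
      have hPinv : (t⁻¹ * s⁻¹).card = (s * t).card := by
        rw [← mul_inv_rev, card_inv]
      have hPle : (S' * T').card ≤ (s * t).card := by
        calc (S' * T').card ≤ (t⁻¹ * s⁻¹).card := card_le_card k4
        _ = (s * t).card := hPinv
      have hScard : S'.card = t.card + v := by rw [k6, card_inv, huB]
      have hTcard : s.card = T'.card + u := by
        have := k7
        rw [card_inv, hvB] at this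
        omega
      have hrel : KRel (S', T') (s, t) := by
        rw [kRel_iff]
        rcases lt_or_eq_of_le hPle with hlt | heq
        · exact Or.inl hlt
        · exact Or.inr (Or.inl ⟨heq, show s.card + t.card < S'.card + T'.card by omega⟩)
      have hkey : S'.card + T'.card - 1 ≤ (S' * T').card :=
        ih (S', T') ⟨⟨1, k1⟩, ⟨1, k2⟩⟩ hrel k1 k2 k3
      have hfinal : S'.card + T'.card - 1 ≤ (s * t).card := le_trans hkey hPle
      omega

end KempermanAux

/-- Suppose `A` and `B` are finite nonempty subsets of a group with `1 ∈ A ∩ B`.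
If `1 = a * b` with `a ∈ A`, `b ∈ B` has no solution except `a = b = 1`, then
`|A * B| ≥ |A| + |B| - 1`. -/
theorem card_mul_ge {G : Type*} [Group G] [DecidableEq G] (A B : Finset G)
    (hA : A.Nonempty) (hB : B.Nonempty) (h1A : (1 : G) ∈ A) (h1B : (1 : G) ∈ B)
    (h : ∀ a ∈ A, ∀ b ∈ B, a * b = 1 → a = 1 ∧ b = 1) :
    A.card + B.card - 1 ≤ (A * B).card :=
  KempermanAux.key (A, B) h1A h1B h
end

section
/- Let G be a finite group and let S be a one-product free sequence over G. If S = S₁·S₂·…·S_t is a factorization of S into (nonempty) subsequences S₁,…,S_t, then |Π(S)| ≥ Σ_{i=1}^{t} |Π(S_i)|. -/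
open scoped Pointwise

/-- The set `Π(S)` of all products of nonempty subsequences of the sequence
(multiset) `S` over `G`, where the terms of a subsequence may be taken in any order. -/
def subseqProds {G : Type*} [Group G] (S : Multiset G) : Set G :=
  {x | ∃ l : List G, l ≠ [] ∧ (l : Multiset G) ≤ S ∧ l.prod = x}

/-- A sequence `S` over `G` is one-product free if `1 ∉ Π(S)`. -/
def OneProdFree {G : Type*} [Group G] (S : Multiset G) : Prop :=
  (1 : G) ∉ subseqProds S

section Kemperman

open Finset

variable {G : Type*} [Group G] [Fintype G] [DecidableEq G]

/-- Kemperman's theorem (special case: unique representation of `1`), proved by a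
DeVos-style e-transform induction. -/
private lemma kemperman_aux :
    ∀ (n : ℕ) (s t : Finset G),
      (2 * #(s * t) - (#s + #t)) * (Fintype.card G + 1) + #s ≤ n →
      1 ∈ s → 1 ∈ t → (∀ x ∈ s, ∀ y ∈ t, x * y = 1 → x = 1) →
      #s + #t - 1 ≤ #(s * t) := by
  intro n
  induction n with
  | zero =>
    intro s t hM h1s h1t _
    have : 0 < #s := card_pos.2 ⟨1, h1s⟩
    omega
  | succ n ih =>
    intro s t hM h1s h1t hu
    have hks : #s ≤ #(s * t) := card_le_card_mul_right ⟨1, h1t⟩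
    have hkt : #t ≤ #(s * t) := card_le_card_mul_left ⟨1, h1s⟩
    by_cases hst : ∀ c ∈ s ∩ t, c = 1
    · -- `s ∩ t ⊆ {1}`, so `s ∪ t ⊆ s * t` gives the bound directly.
      have hsub : s ∪ t ⊆ s * t := by
        intro x hx
        rcases mem_union.1 hx with hx | hx
        · have := mul_mem_mul hx h1t; simpa using this
        · have := mul_mem_mul h1s hx; simpa using this
      have h1 : #(s ∩ t) ≤ 1 := by
        refine card_le_one.2 fun a ha b hb => ?_
        rw [hst a ha, hst b hb]
      have h2 := card_union_add_card_inter s t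
      have h3 : #(s ∪ t) ≤ #(s * t) := card_le_card hsub
      omega
    · push_neg at hst
      obtain ⟨c, hc, hcne⟩ := hst
      have hcs : c ∈ s := (mem_inter.1 hc).1
      have hct : c ∈ t := (mem_inter.1 hc).2
      have hc1s : c⁻¹ ∉ s := by
        intro h
        exact hcne (inv_eq_one.1 (hu c⁻¹ h c hct (inv_mul_cancel c)))
      have hc1t : c⁻¹ ∉ t := by
        intro h
        exact hcne (hu c hcs c⁻¹ h (mul_inv_cancel c))
      set s' : Finset G := s ∩ s.image (· * c⁻¹) with hs'def
      set t' : Finset G := t ∪ t.image (c * ·) with ht'def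
      set s'' : Finset G := s ∪ s.image (· * c) with hs''def
      set t'' : Finset G := t ∩ t.image (c⁻¹ * ·) with ht''def
      have hinjr : Function.Injective (· * c) := fun a b h => by
        simpa using mul_right_cancel (b := c) h
      have hinjr' : Function.Injective (· * c⁻¹) := fun a b h => by
        simpa using mul_right_cancel (b := c⁻¹) h
      have hinjl : Function.Injective (c * ·) := fun a b h => by
        simpa using mul_left_cancel (a := c) h
      have hinjl' : Function.Injective (c⁻¹ * ·) := fun a b h => by
        simpa using mul_left_cancel (a := c⁻¹) h
      -- membership of 1
      have h1s' : (1 : G) ∈ s' :=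
        mem_inter.2 ⟨h1s, mem_image.2 ⟨c, hcs, mul_inv_cancel c⟩⟩
      have h1t' : (1 : G) ∈ t' := mem_union_left _ h1t
      have h1s'' : (1 : G) ∈ s'' := mem_union_left _ h1s
      have h1t'' : (1 : G) ∈ t'' :=
        mem_inter.2 ⟨h1t, mem_image.2 ⟨c, hct, inv_mul_cancel c⟩⟩
      -- cardinality identities
      have hims : s'.image (· * c) = s.image (· * c) ∩ s := by
        rw [hs'def, image_inter _ _ hinjr, image_image]
        congr 1
        · rw [show ((· * c) ∘ (· * c⁻¹)) = id from funext fun x => by simp, image_id]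
      have hcards : #s' + #s'' = 2 * #s := by
        have h1 : #s' = #(s.image (· * c) ∩ s) := by
          rw [← hims, card_image_of_injective _ hinjr]
        have h2 : #s'' + #(s ∩ s.image (· * c)) = #s + #(s.image (· * c)) :=
          card_union_add_card_inter s (s.image (· * c))
        have h3 : #(s.image (· * c)) = #s := card_image_of_injective _ hinjr
        rw [inter_comm] at h1
        omega
      have himt : t''.image (c * ·) = t.image (c * ·) ∩ t := by
        rw [ht''def, image_inter _ _ hinjl, image_image]
        congr 1
        · rw [show ((c * ·) ∘ (c⁻¹ * ·)) = id from funext fun x => by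
            simp [← mul_assoc], image_id]
      have hcardt : #t'' + #t' = 2 * #t := by
        have h1 : #t'' = #(t.image (c * ·) ∩ t) := by
          rw [← himt, card_image_of_injective _ hinjl]
        have h2 : #t' + #(t ∩ t.image (c * ·)) = #t + #(t.image (c * ·)) :=
          card_union_add_card_inter t (t.image (c * ·))
        have h3 : #(t.image (c * ·)) = #t := card_image_of_injective _ hinjl
        rw [inter_comm] at h1
        omega
      -- products are contained in `s * t`
      have hsub' : s' * t' ⊆ s * t := by
        intro z hz
        obtain ⟨x, hx, y, hy, rfl⟩ := mem_mul.1 hz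
        obtain ⟨hxs, hxi⟩ := mem_inter.1 hx
        rcases mem_union.1 hy with hyt | hyi
        · exact mul_mem_mul hxs hyt
        · obtain ⟨w, hw, rfl⟩ := mem_image.1 hyi
          obtain ⟨v, hv, rfl⟩ := mem_image.1 hxi
          have : v * c⁻¹ * (c * w) = v * w := by group
          rw [this]
          exact mul_mem_mul hv hw
      have hsub'' : s'' * t'' ⊆ s * t := by
        intro z hz
        obtain ⟨x, hx, y, hy, rfl⟩ := mem_mul.1 hz
        obtain ⟨hyt, hyi⟩ := mem_inter.1 hy
        rcases mem_union.1 hx with hxs | hxi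
        · exact mul_mem_mul hxs hyt
        · obtain ⟨v, hv, rfl⟩ := mem_image.1 hxi
          obtain ⟨w, hw, rfl⟩ := mem_image.1 hyi
          have : v * c * (c⁻¹ * w) = v * w := by group
          rw [this]
          exact mul_mem_mul hv hw
      -- uniqueness is preserved
      have hu' : ∀ x ∈ s', ∀ y ∈ t', x * y = 1 → x = 1 := by
        intro x hx y hy hxy
        obtain ⟨hxs, hxi⟩ := mem_inter.1 hx
        rcases mem_union.1 hy with hyt | hyi
        · exact hu x hxs y hyt hxy
        · obtain ⟨w, hw, rfl⟩ := mem_image.1 hyi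
          obtain ⟨v, hv, rfl⟩ := mem_image.1 hxi
          have hvw : v * w = 1 := by rw [← hxy]; group
          have hv1 : v = 1 := hu v hv w hw hvw
          subst hv1
          exact absurd (by simpa using hxs) hc1s
      have hu'' : ∀ x ∈ s'', ∀ y ∈ t'', x * y = 1 → x = 1 := by
        intro x hx y hy hxy
        obtain ⟨hyt, hyi⟩ := mem_inter.1 hy
        rcases mem_union.1 hx with hxs | hxi
        · exact hu x hxs y hyt hxy
        · obtain ⟨v, hv, rfl⟩ := mem_image.1 hxi
          obtain ⟨w, hw, rfl⟩ := mem_image.1 hyi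
          have hvw : v * w = 1 := by rw [← hxy]; group
          have hv1 : v = 1 := hu v hv w hw hvw
          have hw1 : w = 1 := by rw [hv1, one_mul] at hvw; exact hvw
          rw [hw1, mul_one] at hyt
          exact absurd hyt hc1t
      -- strict decrease
      have hlt : #s' < #s := by
        refine lt_of_le_of_ne (card_le_card inter_subset_left) fun heq => ?_
        have hseq : s' = s := eq_of_subset_of_card_le inter_subset_left heq.ge
        have hsubim : s ⊆ s.image (· * c⁻¹) := by
          intro x hx
          have hx' : x ∈ s' := by rw [hseq]; exact hx
          rw [hs'def] at hx'
          exact (mem_inter.1 hx').2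
        have : s.image (· * c⁻¹) = s :=
          (eq_of_subset_of_card_le hsubim
            (by rw [card_image_of_injective _ hinjr'])).symm
        have hmem : c⁻¹ ∈ s.image (· * c⁻¹) := mem_image.2 ⟨1, h1s, one_mul _⟩
        rw [this] at hmem
        exact hc1s hmem
      -- numeric setup
      have hk' : #(s' * t') ≤ #(s * t) := card_le_card hsub'
      have hk'' : #(s'' * t'') ≤ #(s * t) := card_le_card hsub''
      have hsC : #s'' ≤ Fintype.card G := card_le_univ _
      have hks' : #s' ≤ #(s' * t') := card_le_card_mul_right ⟨1, h1t'⟩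
      have hkt' : #t' ≤ #(s' * t') := card_le_card_mul_left ⟨1, h1s'⟩
      have hks'' : #s'' ≤ #(s'' * t'') := card_le_card_mul_right ⟨1, h1t''⟩
      have hkt'' : #t'' ≤ #(s'' * t'') := card_le_card_mul_left ⟨1, h1s''⟩
      by_cases hbr : #s + #t ≤ #s' + #t'
      · -- recurse on (s', t')
        have hμ : 2 * #(s' * t') - (#s' + #t') ≤ 2 * #(s * t) - (#s + #t) := by
          omega
        have hP : (2 * #(s' * t') - (#s' + #t')) * (Fintype.card G + 1) ≤
            (2 * #(s * t) - (#s + #t)) * (Fintype.card G + 1) :=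
          Nat.mul_le_mul_right _ hμ
        have hM' : (2 * #(s' * t') - (#s' + #t')) * (Fintype.card G + 1) + #s' ≤ n := by
          omega
        have := ih s' t' hM' h1s' h1t' hu'
        omega
      · -- recurse on (s'', t'')
        have hbig : #s + #t + 1 ≤ #s'' + #t'' := by omega
        have hμ : 2 * #(s'' * t'') - (#s'' + #t'') + 1 ≤ 2 * #(s * t) - (#s + #t) := by
          omega
        have hP : (2 * #(s'' * t'') - (#s'' + #t'') + 1) * (Fintype.card G + 1) ≤
            (2 * #(s * t) - (#s + #t)) * (Fintype.card G + 1) :=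
          Nat.mul_le_mul_right _ hμ
        rw [add_mul, one_mul] at hP
        have h0s : 0 < #s := card_pos.2 ⟨1, h1s⟩
        have hM'' : (2 * #(s'' * t'') - (#s'' + #t'')) * (Fintype.card G + 1) + #s'' ≤ n := by
          omega
        have := ih s'' t'' hM'' h1s'' h1t'' hu''
        omega

/-- Kemperman's theorem, special case: if `1 ∈ s`, `1 ∈ t` and the only representation
of `1` as a product `x * y` with `x ∈ s`, `y ∈ t` is `1 * 1`, then `|s*t| ≥ |s| + |t| - 1`. -/
private lemma kemperman (s t : Finset G) (h1s : 1 ∈ s) (h1t : 1 ∈ t)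
    (hu : ∀ x ∈ s, ∀ y ∈ t, x * y = 1 → x = 1) :
    #s + #t - 1 ≤ #(s * t) :=
  kemperman_aux _ s t le_rfl h1s h1t hu

end Kemperman

section SubseqProds

open Finset

variable {G : Type*} [Group G]

lemma subseqProds_mono {T S : Multiset G} (h : T ≤ S) :
    subseqProds T ⊆ subseqProds S := by
  rintro x ⟨l, hl, hlT, rfl⟩
  exact ⟨l, hl, hlT.trans h, rfl⟩

lemma subseqProds_mul_mem {T U : Multiset G} {x y : G}
    (hx : x ∈ subseqProds T) (hy : y ∈ subseqProds U) :
    x * y ∈ subseqProds (T + U) := by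
  obtain ⟨l, hl, hlT, rfl⟩ := hx
  obtain ⟨m, hm, hmU, rfl⟩ := hy
  refine ⟨l ++ m, by simp [hl], ?_, ?_⟩
  · rw [← Multiset.coe_add]
    exact add_le_add hlT hmU
  · rw [List.prod_append]

/-- The key two-block inequality: if `1 ∉ Π(T + U)` then
`|Π(T)| + |Π(U)| ≤ |Π(T + U)|`. -/
lemma subseqProds_block [Fintype G] (T U : Multiset G) (h : OneProdFree (T + U)) :
    (subseqProds T).ncard + (subseqProds U).ncard ≤ (subseqProds (T + U)).ncard := by
  classical
  have hTfin : (subseqProds T).Finite := Set.toFinite _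
  have hUfin : (subseqProds U).Finite := Set.toFinite _
  have hPfin : (subseqProds (T + U)).Finite := Set.toFinite _
  set A := hTfin.toFinset with hA
  set B := hUfin.toFinset with hB
  set P := hPfin.toFinset with hP
  have hTsub : subseqProds T ⊆ subseqProds (T + U) :=
    subseqProds_mono (Multiset.le_add_right T U)
  have hUsub : subseqProds U ⊆ subseqProds (T + U) :=
    subseqProds_mono (Multiset.le_add_left U T)
  have h1A : (1 : G) ∉ A := by
    rw [hA, Set.Finite.mem_toFinset]
    exact fun hx => h (hTsub hx)
  have h1B : (1 : G) ∉ B := by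
    rw [hB, Set.Finite.mem_toFinset]
    exact fun hx => h (hUsub hx)
  have h1P : (1 : G) ∉ P := by
    rw [hP, Set.Finite.mem_toFinset]
    exact h
  have hu : ∀ x ∈ insert (1 : G) A, ∀ y ∈ insert (1 : G) B, x * y = 1 → x = 1 := by
    intro x hx y hy hxy
    rcases Finset.mem_insert.1 hx with rfl | hxA
    · rfl
    · rcases Finset.mem_insert.1 hy with rfl | hyB
      · rwa [mul_one] at hxy
      · exfalso
        apply h
        rw [← hxy]
        exact subseqProds_mul_mem (hA ▸ Set.Finite.mem_toFinset hTfin |>.1 hxA)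
          (hB ▸ Set.Finite.mem_toFinset hUfin |>.1 hyB)
  have hkem := kemperman (insert (1 : G) A) (insert (1 : G) B)
    (Finset.mem_insert_self _ _) (Finset.mem_insert_self _ _) hu
  have hsub : insert (1 : G) A * insert (1 : G) B ⊆ insert (1 : G) P := by
    intro z hz
    obtain ⟨x, hx, y, hy, rfl⟩ := Finset.mem_mul.1 hz
    rcases Finset.mem_insert.1 hx with rfl | hxA
    · rcases Finset.mem_insert.1 hy with rfl | hyB
      · simp
      · rw [one_mul]
        refine Finset.mem_insert_of_mem ?_
        rw [hP, Set.Finite.mem_toFinset]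
        exact hUsub ((Set.Finite.mem_toFinset hUfin).1 hyB)
    · rcases Finset.mem_insert.1 hy with rfl | hyB
      · rw [mul_one]
        refine Finset.mem_insert_of_mem ?_
        rw [hP, Set.Finite.mem_toFinset]
        exact hTsub ((Set.Finite.mem_toFinset hTfin).1 hxA)
      · refine Finset.mem_insert_of_mem ?_
        rw [hP, Set.Finite.mem_toFinset]
        exact subseqProds_mul_mem ((Set.Finite.mem_toFinset hTfin).1 hxA)
          ((Set.Finite.mem_toFinset hUfin).1 hyB)
  have hcard1 : #(insert (1 : G) A) = #A + 1 := Finset.card_insert_of_notMem h1A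
  have hcard2 : #(insert (1 : G) B) = #B + 1 := Finset.card_insert_of_notMem h1B
  have hcard3 : #(insert (1 : G) A * insert (1 : G) B) ≤ #P + 1 :=
    (Finset.card_le_card hsub).trans (Finset.card_insert_le _ _)
  have hAcard : (subseqProds T).ncard = #A := Set.ncard_eq_toFinset_card _ hTfin
  have hBcard : (subseqProds U).ncard = #B := Set.ncard_eq_toFinset_card _ hUfin
  have hPcard : (subseqProds (T + U)).ncard = #P := Set.ncard_eq_toFinset_card _ hPfin
  omega

end SubseqProds

/-- Let `G` be a finite group and let `S` be a one-product free sequence over `G`.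
If `S = S₁ · S₂ · … · S_t` is a factorization of `S` into nonempty subsequences,
then `|Π(S)| ≥ ∑ i, |Π(Sᵢ)|`. -/
theorem sum_card_subseqProds_le {G : Type*} [Group G] [Fintype G]
    (S : Multiset G) (hS : OneProdFree S) (t : ℕ) (f : Fin t → Multiset G)
    (hne : ∀ i, f i ≠ 0) (hsum : S = ∑ i, f i) :
    ∑ i, (subseqProds (f i)).ncard ≤ (subseqProds S).ncard := by
  classical
  induction t generalizing S with
  | zero => simp
  | succ n ih =>
    rw [Fin.sum_univ_succ] at hsum
    set T : Multiset G := ∑ i : Fin n, f i.succ with hT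
    have hSeq : S = f 0 + T := hsum
    have hTfree : OneProdFree T := by
      intro hx
      exact hS (subseqProds_mono (hSeq ▸ Multiset.le_add_left T (f 0)) hx)
    have htail := ih T hTfree (fun i => f i.succ) (fun i => hne i.succ) rfl
    have hblock := subseqProds_block (f 0) T (hSeq ▸ hS)
    calc ∑ i : Fin (n + 1), (subseqProds (f i)).ncard
        = (subseqProds (f 0)).ncard + ∑ i : Fin n, (subseqProds (f i.succ)).ncard := by
          rw [Fin.sum_univ_succ]
      _ ≤ (subseqProds (f 0)).ncard + (subseqProds T).ncard := by
          exact Nat.add_le_add_left htail _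
      _ ≤ (subseqProds (f 0 + T)).ncard := hblock
      _ = (subseqProds S).ncard := by rw [← hSeq]
end

section
/- Let S be a one-product free sequence over a finite group G. Then |Π(S)| ≥ |S|, where |S| denotes the length of S. -/
private lemma prefix_prod_ne {G : Type*} [Group G] (l : List G)
    (hS : OneProdFree (l : Multiset G)) {i j : ℕ} (hij : i < j) (hj : j < l.length) :
    (l.take (i+1)).prod ≠ (l.take (j+1)).prod := by
  intro h
  set t := (l.drop (i+1)).take (j - i) with ht_def
  have ht : l.take (j+1) = l.take (i+1) ++ t := by
    rw [ht_def, ← List.take_add]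
    congr 1
    omega
  have hprod : t.prod = 1 := by
    have := h
    rw [ht, List.prod_append] at this
    exact (mul_eq_left.mp this.symm)
  apply hS
  refine ⟨t, ?_, ?_, hprod⟩
  · have : t.length = min (j - i) (l.length - (i+1)) := by
      simp [ht_def, List.length_take, List.length_drop]
    intro hnil
    rw [hnil] at this
    simp at this
    omega
  · rw [Multiset.coe_le]
    exact ((List.take_sublist _ _).trans (List.drop_sublist _ _)).subperm

/-- Let `S` be a one-product free sequence over a finite group `G`.
Then `|Π(S)| ≥ |S|`. -/
theorem length_le_card_subseqProds {G : Type*} [Group G] [Fintype G]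
    (S : Multiset G) (hS : OneProdFree S) :
    Multiset.card S ≤ (subseqProds S).ncard := by
  classical
  obtain ⟨l, rfl⟩ := S.exists_rep
  simp only [Multiset.quot_mk_to_coe] at *
  have hfin : (subseqProds (l : Multiset G)).Finite := Set.toFinite _
  rw [Set.ncard_eq_toFinset_card' _]
  rw [Multiset.coe_card]
  have := Finset.card_le_card_of_injOn (f := fun k => (l.take (k+1)).prod)
    (s := Finset.range l.length) (t := hfin.toFinset) ?_ ?_
  · simpa using this
  · intro k hk
    simp only [Finset.coe_range, Set.mem_Iio] at hk
    rw [Finset.mem_coe, Set.Finite.mem_toFinset]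
    refine ⟨l.take (k+1), ?_, ?_, rfl⟩
    · intro hnil
      have hlen := congrArg List.length hnil
      rw [List.length_take] at hlen
      simp only [List.length_nil] at hlen
      omega
    · rw [Multiset.coe_le]
      exact (List.take_sublist _ _).subperm
  · intro i hi j hj hij
    simp only [Finset.coe_range, Set.mem_Iio] at hi hj
    by_contra hne
    rcases lt_or_gt_of_ne hne with h | h
    · exact prefix_prod_ne l hS h hj hij
    · exact prefix_prod_ne l hS h hi hij.symm
end

section
/- Let N be a subgroup of a finite group G, let p(G) denote the smallest prime divisor of |G|, and for X ⊆ G write X̄ = { xN : x ∈ X } for the image of X in the set of left cosets of N. Let A and B be nonempty subsets of G such that the coset N = 1̄ belongs to both Ā and B̄. If |B̄| ≥ 2, then |image of AB ∪ BA| ≥ min{ p(G), |Ā| + 1 }, where AB = { ab : a ∈ A, b ∈ B } and BA = { ba : a ∈ A, b ∈ B }. -/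
open scoped Pointwise

/-- Let `N` be a subgroup of a finite group `G`, let `p` be the smallest prime divisor
of `|G|`, and for `X ⊆ G` let `X̄` denote the image of `X` in the left cosets `G ⧸ N`.
Let `A, B` be nonempty subsets of `G` with `1̄ ∈ Ā ∩ B̄`. If `|B̄| ≥ 2`, then
`|image of A*B ∪ B*A| ≥ min (p, |Ā| + 1)`. -/
theorem card_image_mul_union {G : Type*} [Group G] [Fintype G] (N : Subgroup G)
    (p : ℕ) (hp : p.Prime) (hpn : p ∣ Fintype.card G)
    (hmin : ∀ q : ℕ, q.Prime → q ∣ Fintype.card G → p ≤ q)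
    (A B : Set G) (hA : A.Nonempty) (hB : B.Nonempty)
    (h1A : (QuotientGroup.mk 1 : G ⧸ N) ∈ QuotientGroup.mk '' A)
    (h1B : (QuotientGroup.mk 1 : G ⧸ N) ∈ QuotientGroup.mk '' B)
    (hB2 : 2 ≤ (QuotientGroup.mk '' B : Set (G ⧸ N)).ncard) :
    min p ((QuotientGroup.mk '' A : Set (G ⧸ N)).ncard + 1) ≤
      (QuotientGroup.mk '' (A * B ∪ B * A) : Set (G ⧸ N)).ncard := by
  classical
  by_contra hcon
  push_neg at hcon
  set π : G → G ⧸ N := QuotientGroup.mk with hπ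
  set Q : Set (G ⧸ N) := π '' (A * B ∪ B * A) with hQ
  obtain ⟨hlt_p, hle_A⟩ := lt_min_iff.mp hcon
  have hle_A' : Q.ncard ≤ (π '' A).ncard := Nat.lt_succ_iff.mp hle_A
  -- extract b₀ ∈ B ∩ N and a₀ ∈ A ∩ N
  obtain ⟨b₀, hb₀B, hb₀⟩ := h1B
  have hb₀N : b₀ ∈ N := by
    have := QuotientGroup.eq.mp hb₀
    simpa using N.inv_mem this
  obtain ⟨a₀, ha₀A, ha₀⟩ := h1A
  have ha₀N : a₀ ∈ N := by
    have := QuotientGroup.eq.mp ha₀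
    simpa using N.inv_mem this
  -- π '' A ⊆ Q
  have hAsub : π '' A ⊆ Q := by
    rintro x ⟨a, ha, rfl⟩
    exact ⟨a * b₀, Or.inl (Set.mul_mem_mul ha hb₀B), QuotientGroup.mk_mul_of_mem a hb₀N⟩
  have hQA : π '' A = Q := Set.eq_of_subset_of_ncard_le hAsub hle_A' (Set.toFinite _)
  -- the set S = A * N
  set S : Set G := A * (N : Set G) with hS
  have h1S : (1 : G) ∈ S := ⟨a₀, ha₀A, a₀⁻¹, N.inv_mem ha₀N, mul_inv_cancel a₀⟩
  have hSN : ∀ x ∈ S, ∀ n ∈ N, x * n ∈ S := by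
    rintro x ⟨a, ha, m, hm, rfl⟩ n hn
    exact ⟨a, ha, m * n, N.mul_mem hm hn, (mul_assoc a m n).symm⟩
  have hBA : ∀ b ∈ B, ∀ a ∈ A, b * a ∈ S := by
    intro b hb a ha
    have hmem : π (b * a) ∈ Q := ⟨b * a, Or.inr (Set.mul_mem_mul hb ha), rfl⟩
    rw [← hQA] at hmem
    obtain ⟨a', ha', heq⟩ := hmem
    have hn : a'⁻¹ * (b * a) ∈ N := QuotientGroup.eq.mp heq
    exact ⟨a', ha', a'⁻¹ * (b * a), hn, by group⟩
  -- each b ∈ B stabilizes S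
  have hbS : ∀ b ∈ B, b • S = S := by
    intro b hb
    apply Set.eq_of_subset_of_ncard_le
    · rintro x ⟨y, hy, rfl⟩
      obtain ⟨a, ha, n, hn, rfl⟩ := hy
      have : b * a ∈ S := hBA b hb a ha
      have := hSN _ this n hn
      simpa [smul_eq_mul, mul_assoc] using this
    · rw [Set.ncard_smul_set]
    · exact Set.toFinite _
  -- hence the closure of B stabilizes S
  set H : Subgroup G := Subgroup.closure B with hH
  have hHS : ∀ g ∈ H, g • S = S := by
    intro g hg
    induction hg using Subgroup.closure_induction with
    | mem x hx => exact hbS x hx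
    | one => simp
    | mul x y hx hy ihx ihy => rw [mul_smul, ihy, ihx]
    | inv x hx ih =>
        conv_lhs => rw [← ih]
        exact inv_smul_smul x S
  have hHsubS : (H : Set G) ⊆ S := by
    intro g hg
    have := hHS g hg
    rw [← this]
    simpa using Set.smul_mem_smul_set (a := g) h1S
  -- π '' H ⊆ π '' A
  have hπS : π '' S ⊆ π '' A := by
    rintro x ⟨y, ⟨a, ha, n, hn, rfl⟩, rfl⟩
    exact ⟨a, ha, (QuotientGroup.mk_mul_of_mem a hn).symm⟩
  have hπH : π '' (H : Set G) ⊆ π '' A :=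
    (Set.image_mono (f := π) hHsubS).trans hπS
  -- the image of H is the orbit of the trivial coset under H
  set x0 : G ⧸ N := QuotientGroup.mk 1 with hx0
  have horb : MulAction.orbit H x0 = π '' (H : Set G) := by
    ext x
    constructor
    · rintro ⟨⟨h, hh⟩, rfl⟩
      refine ⟨h, hh, ?_⟩
      show π h = (⟨h, hh⟩ : H) • x0
      have : (⟨h, hh⟩ : H) • x0 = QuotientGroup.mk ((h : G) * 1) := by
        rw [hx0]
        exact MulAction.Quotient.smul_mk N h 1
      rw [this, mul_one]
    · rintro ⟨h, hh, rfl⟩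
      refine ⟨⟨h, hh⟩, ?_⟩
      show (⟨h, hh⟩ : H) • x0 = π h
      have : (⟨h, hh⟩ : H) • x0 = QuotientGroup.mk ((h : G) * 1) := by
        rw [hx0]
        exact MulAction.Quotient.smul_mk N h 1
      rw [this, mul_one]
  -- cardinality of the orbit divides the order of G
  set d : ℕ := (π '' (H : Set G)).ncard with hd
  have hd_card : d = Nat.card (MulAction.orbit H x0) := by
    rw [horb, Nat.card_coe_set_eq]
  have hdvd : d ∣ Fintype.card G := by
    rw [hd_card, Nat.card_congr (MulAction.orbitEquivQuotientStabilizer H x0),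
      ← Nat.card_eq_fintype_card]
    exact dvd_trans (MulAction.stabilizer H x0).index_dvd_card H.card_subgroup_dvd_card
  -- d ≥ 2
  have hx0mem : x0 ∈ π '' (H : Set G) := ⟨1, H.one_mem, rfl⟩
  obtain ⟨b₁, hb₁B, hb₁⟩ : ∃ b₁ ∈ B, π b₁ ≠ x0 := by
    by_contra hall
    push_neg at hall
    have hsub : π '' B ⊆ {x0} := by
      rintro x ⟨b, hb, rfl⟩
      exact hall b hb
    have := Set.ncard_le_ncard hsub (Set.finite_singleton x0)
    rw [Set.ncard_singleton] at this
    omega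
  have hb₁mem : π b₁ ∈ π '' (H : Set G) := ⟨b₁, Subgroup.subset_closure hb₁B, rfl⟩
  have h2d : 2 ≤ d := by
    have : 1 < (π '' (H : Set G)).ncard :=
      Set.one_lt_ncard_iff (Set.toFinite _) |>.mpr ⟨π b₁, x0, hb₁mem, hx0mem, hb₁⟩
    omega
  -- smallest prime divisor argument: p ≤ d
  have hpd : p ≤ d := by
    have hne1 : d ≠ 1 := by omega
    have hq : d.minFac.Prime := Nat.minFac_prime hne1
    have hqd : d.minFac ∣ d := Nat.minFac_dvd d
    have := hmin d.minFac hq (hqd.trans hdvd)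
    exact this.trans (Nat.minFac_le (by omega))
  -- contradiction
  have hfin : d ≤ (π '' A).ncard := Set.ncard_le_ncard hπH (Set.toFinite _)
  rw [hQA] at hfin
  omega
end

section
/- Let N be a subgroup of a finite group G, let p(G) denote the smallest prime divisor of |G|, and let S be a nonempty sequence over G \ N (every term of S lies outside N). Then |{1̄} ∪ Π(S)̄| ≥ min{ p(G), |S| + 1 }, where for X ⊆ G, X̄ denotes the image of X in the left cosets of N. -/
open Pointwise


section Aux

variable {G : Type*} [Group G] [Fintype G]

/-- Any divisor of `|G|` greater than `1` is at least the smallest prime divisor. -/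
lemma aux_p_le_of_dvd {p : ℕ} (hp : p.Prime)
    (hmin : ∀ q : ℕ, q.Prime → q ∣ Fintype.card G → p ≤ q)
    {d : ℕ} (hd : d ∣ Fintype.card G) (h1 : 1 < d) : p ≤ d := by
  have hmf : d.minFac.Prime := Nat.minFac_prime (by omega)
  exact le_trans (hmin d.minFac hmf ((Nat.minFac_dvd d).trans hd)) (Nat.minFac_le (by omega))

/-- If a finite subset of `G ⧸ N` containing `1̄` is stabilized by left multiplication
by `g ∉ N`, then it has at least `p` elements. -/
lemma aux_orbit {N : Subgroup G} {p : ℕ} (hp : p.Prime)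
    (hmin : ∀ q : ℕ, q.Prime → q ∣ Fintype.card G → p ≤ q)
    {g : G} (hg : g ∉ N) {T : Set (G ⧸ N)}
    (h1 : (QuotientGroup.mk 1 : G ⧸ N) ∈ T) (hT : g • T = T) : p ≤ T.ncard := by
  classical
  have hgstab : g ∈ MulAction.stabilizer G T := hT
  set H := Subgroup.zpowers g with hH
  have hHle : H ≤ MulAction.stabilizer G T := by
    rw [hH, Subgroup.zpowers_le]; exact hgstab
  set b : G ⧸ N := QuotientGroup.mk 1 with hb
  have horbsub : MulAction.orbit H b ⊆ T := by
    rintro x ⟨⟨h, hh⟩, rfl⟩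
    have : h • T = T := hHle hh
    rw [← this]
    exact Set.smul_mem_smul_set h1
  -- the orbit has at least 2 elements
  have hgb : g • b ∈ MulAction.orbit H b :=
    ⟨⟨g, Subgroup.mem_zpowers g⟩, rfl⟩
  have hbb : b ∈ MulAction.orbit H b := MulAction.mem_orbit_self b
  have hne : g • b ≠ b := by
    rw [hb]
    show g • (QuotientGroup.mk 1 : G ⧸ N) ≠ QuotientGroup.mk 1
    rw [MulAction.Quotient.smul_mk, smul_eq_mul, mul_one]
    intro h
    exact hg (by simpa using QuotientGroup.eq.mp h)
  have h2 : 1 < Nat.card (MulAction.orbit H b) := by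
    have hfin : (MulAction.orbit H b).Finite := Set.toFinite _
    rw [Nat.card_eq_card_toFinset]
    refine Finset.one_lt_card.mpr ⟨g • b, ?_, b, ?_, hne⟩ <;>
      simpa [Set.mem_toFinset] using ‹_›
  -- orbit-stabilizer: orbit size divides |H| = orderOf g divides |G|
  have hdvd : Nat.card (MulAction.orbit H b) ∣ Fintype.card G := by
    have e := MulAction.orbitEquivQuotientStabilizer H b
    have h1' : Nat.card (MulAction.orbit H b) = Nat.card (H ⧸ MulAction.stabilizer H b) :=
      Nat.card_congr e
    rw [h1']
    calc Nat.card (H ⧸ MulAction.stabilizer H b) ∣ Nat.card H :=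
          Subgroup.card_quotient_dvd_card _
      _ = orderOf g := Nat.card_zpowers g
      _ ∣ Fintype.card G := orderOf_dvd_card
  have hp_le : p ≤ Nat.card (MulAction.orbit H b) := aux_p_le_of_dvd hp hmin hdvd h2
  refine hp_le.trans ?_
  rw [← Nat.card_coe_set_eq]
  exact Set.ncard_le_ncard horbsub (Set.toFinite T)

end Aux

/-- Let `N` be a subgroup of a finite group `G`, let `p` be the smallest prime divisor
of `|G|`, and let `S` be a nonempty sequence over `G \ N`. Then
`|{1̄} ∪ Π(S)̄| ≥ min (p, |S| + 1)`, where `X̄` denotes the image of `X ⊆ G` in the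
left cosets `G ⧸ N`. -/
theorem min_le_card_insert_image_subseqProds {G : Type*} [Group G] [Fintype G]
    (N : Subgroup G) (p : ℕ) (hp : p.Prime) (hpn : p ∣ Fintype.card G)
    (hmin : ∀ q : ℕ, q.Prime → q ∣ Fintype.card G → p ≤ q)
    (S : Multiset G) (hS : S ≠ 0) (hSN : ∀ g ∈ S, g ∉ N) :
    min p (Multiset.card S + 1) ≤
      ({QuotientGroup.mk 1} ∪ QuotientGroup.mk '' subseqProds S : Set (G ⧸ N)).ncard := by
  classical
  clear hS
  induction S using Multiset.induction with
  | empty =>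
      have : subseqProds (0 : Multiset G) = ∅ := by
        ext x
        simp only [subseqProds, Set.mem_setOf_eq, Set.mem_empty_iff_false, iff_false]
        rintro ⟨l, hl, hle, -⟩
        exact hl (by simpa using Multiset.le_zero.mp hle)
      rw [this]
      simpa using min_le_right p 1
  | cons a s ih =>
      set A : Set (G ⧸ N) :=
        ({QuotientGroup.mk 1} ∪ QuotientGroup.mk '' subseqProds s) with hA
      have ha : a ∉ N := hSN a (Multiset.mem_cons_self a s)
      have ihs := ih (fun g hg => hSN g (Multiset.mem_cons_of_mem hg))
      have hmono : subseqProds s ⊆ subseqProds (a ::ₘ s) := by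
        rintro x ⟨l, hl, hle, hprod⟩
        exact ⟨l, hl, hle.trans (Multiset.le_cons_self s a), hprod⟩
      have hAsub : A ⊆ ({QuotientGroup.mk 1} ∪
          QuotientGroup.mk '' subseqProds (a ::ₘ s) : Set (G ⧸ N)) := by
        apply Set.union_subset_union_right
        exact Set.image_mono hmono
      have hsmul : ∀ x ∈ A, a • x ∈ ({QuotientGroup.mk 1} ∪
          QuotientGroup.mk '' subseqProds (a ::ₘ s) : Set (G ⧸ N)) := by
        rintro x (hx | ⟨y, hy, rfl⟩)
        · -- x = 1̄, a • 1̄ = ā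
          right
          refine ⟨a, ⟨[a], by simp, ?_, by simp⟩, ?_⟩
          · simpa using Multiset.cons_le_cons a (Multiset.zero_le s)
          · rw [Set.mem_singleton_iff.mp hx, MulAction.Quotient.smul_mk, smul_eq_mul, mul_one]
        · obtain ⟨l, hl, hle, hprod⟩ := hy
          right
          refine ⟨a * y, ⟨a :: l, by simp, ?_, by simp [hprod]⟩, ?_⟩
          · simpa using Multiset.cons_le_cons a hle
          · rw [MulAction.Quotient.smul_mk]; rfl
      by_cases hstab : a • A ⊆ A
      · -- stabilized case: A has size ≥ p
        have heq : a • A = A :=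
          Set.eq_of_subset_of_ncard_le hstab (le_of_eq (Set.ncard_smul_set a A).symm)
            (Set.toFinite A)
        have hpA : p ≤ A.ncard := aux_orbit hp hmin ha (Set.mem_union_left _ rfl) heq
        calc min p (Multiset.card (a ::ₘ s) + 1) ≤ p := min_le_left _ _
          _ ≤ A.ncard := hpA
          _ ≤ _ := Set.ncard_le_ncard hAsub (Set.toFinite _)
      · -- growth case
        obtain ⟨y, hyA, hynot⟩ := Set.not_subset.mp hstab
        obtain ⟨x, hxA, rfl⟩ := hyA
        have hins : insert (a • x) A ⊆ ({QuotientGroup.mk 1} ∪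
            QuotientGroup.mk '' subseqProds (a ::ₘ s) : Set (G ⧸ N)) := by
          rw [Set.insert_subset_iff]
          exact ⟨hsmul x hxA, hAsub⟩
        have hcard : A.ncard + 1 ≤ (insert (a • x) A).ncard := by
          rw [Set.ncard_insert_of_notMem hynot (Set.toFinite A)]
        calc min p (Multiset.card (a ::ₘ s) + 1)
            ≤ min p (Multiset.card s + 1) + 1 := by
              rw [Multiset.card_cons]; omega
          _ ≤ A.ncard + 1 := by omega
          _ ≤ (insert (a • x) A).ncard := hcard
          _ ≤ _ := Set.ncard_le_ncard hins (Set.toFinite _)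
end

section
/- Let G be a finite group of order n, let p be the smallest prime divisor of n, and suppose G has a cyclic subgroup H of order n/p. Let h be a generator of H and let g ∈ G \ H. Then the sequence S consisting of p − 1 copies of g and n/p − 1 copies of h is one-product free (and has length n/p + p − 2). -/
/-- A list whose entries are all `x` or `1` has product `x ^ (count of x)`. -/
lemma prod_eq_pow_count_aux {M : Type*} [Monoid M] [DecidableEq M] (x : M) (hx : x ≠ 1) :
    ∀ l : List M, (∀ y ∈ l, y = x ∨ y = 1) → l.prod = x ^ l.count x := by
  intro l
  induction l with
  | nil => simp
  | cons a t ih =>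
    intro hmem
    have ha := hmem a (by simp)
    have ht : ∀ y ∈ t, y = x ∨ y = 1 := fun y hy => hmem y (by simp [hy])
    rcases ha with rfl | rfl
    · rw [List.prod_cons, ih ht, List.count_cons_self, pow_succ']
    · rw [List.prod_cons, ih ht, one_mul, List.count_cons_of_ne hx.symm]

/-- Counting under a map, for lists whose entries are all `g` or `h`. -/
lemma count_map_aux {α β : Type*} [DecidableEq α] [DecidableEq β]
    (f : α → β) (g h : α) (hgh : g ≠ h) (hfg : f g ≠ f h) :
    ∀ l : List α, (∀ y ∈ l, y = g ∨ y = h) → (l.map f).count (f g) = l.count g := by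
  intro l
  induction l with
  | nil => simp
  | cons a t ih =>
    intro hmem
    have ht : ∀ y ∈ t, y = g ∨ y = h := fun y hy => hmem y (by simp [hy])
    rcases hmem a (by simp) with rfl | rfl
    · rw [List.map_cons, List.count_cons_self, List.count_cons_self, ih ht]
    · rw [List.map_cons, List.count_cons_of_ne hfg.symm, List.count_cons_of_ne hgh.symm, ih ht]

/-- A subgroup whose index is the smallest prime divisor of the order of the group
is normal. -/
lemma normal_of_index_eq_min_prime {G : Type*} [Group G] [Fintype G]
    (p : ℕ) (hp : p.Prime)
    (hmin : ∀ q : ℕ, q.Prime → q ∣ Fintype.card G → p ≤ q)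
    (H : Subgroup G) (hindex : H.index = p) : H.Normal := by
  classical
  have hn0 : 0 < Fintype.card G := Fintype.card_pos
  set K := H.normalCore with hK
  have hKle : K ≤ H := H.normalCore_le
  have hdvd1 : H.index ∣ K.index := Subgroup.index_dvd_of_le hKle
  haveI : Finite (G ⧸ H) := Quotient.finite _
  letI : Fintype (G ⧸ H) := Fintype.ofFinite _
  have hcardQ : Nat.card (G ⧸ H) = p := by
    rw [← Subgroup.index_eq_card, hindex]
  have hdvd2 : K.index ∣ Nat.factorial p := by
    rw [hK, Subgroup.normalCore_eq_ker, Subgroup.index_ker]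
    calc Nat.card (MulAction.toPermHom G (G ⧸ H)).range
        ∣ Nat.card (Equiv.Perm (G ⧸ H)) := Subgroup.card_subgroup_dvd_card _
      _ = Nat.factorial p := by
          rw [Nat.card_eq_fintype_card, Fintype.card_perm, ← Nat.card_eq_fintype_card, hcardQ]
  have hdvd3 : K.index ∣ Fintype.card G := by
    rw [← Nat.card_eq_fintype_card]; exact K.index_dvd_card
  rw [hindex] at hdvd1
  obtain ⟨m, hm⟩ := hdvd1
  have hpred : p - 1 + 1 = p := Nat.succ_pred_eq_of_pos hp.pos
  have hpfac : Nat.factorial p = p * Nat.factorial (p - 1) := by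
    calc Nat.factorial p = Nat.factorial (p - 1 + 1) := by rw [hpred]
      _ = (p - 1 + 1) * Nat.factorial (p - 1) := Nat.factorial_succ _
      _ = p * Nat.factorial (p - 1) := by rw [hpred]
  have hmfac : m ∣ Nat.factorial (p - 1) := by
    rw [hm, hpfac] at hdvd2
    exact (Nat.mul_dvd_mul_iff_left hp.pos).mp hdvd2
  have hm1 : m = 1 := by
    by_contra hm1
    have hm0 : m ≠ 0 := by
      rintro rfl
      rw [mul_zero] at hm
      rw [hm] at hdvd3
      exact hn0.ne' (Nat.eq_zero_of_zero_dvd hdvd3)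
    have hq : m.minFac.Prime := Nat.minFac_prime hm1
    have hq_dvd_n : m.minFac ∣ Fintype.card G :=
      (m.minFac_dvd.trans ⟨p, by rw [hm, mul_comm]⟩).trans hdvd3
    have hpq : p ≤ m.minFac := hmin _ hq hq_dvd_n
    have hq_le : m.minFac ≤ p - 1 :=
      (Nat.Prime.dvd_factorial hq).mp (m.minFac_dvd.trans hmfac)
    omega
  have hKindex : K.index = p := by rw [hm, hm1, mul_one]
  have hrel : K.relIndex H * H.index = K.index := Subgroup.relIndex_mul_index hKle
  rw [hindex, hKindex] at hrel
  have hrel1 : K.relIndex H = 1 := by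
    have : K.relIndex H * p = 1 * p := by rw [hrel, one_mul]
    exact Nat.eq_of_mul_eq_mul_right hp.pos this
  have hHK : H ≤ K := Subgroup.relIndex_eq_one.mp hrel1
  have hEq : H = K := le_antisymm hHK hKle
  rw [hEq]
  infer_instance

/-- Let `G` be a finite group of order `n`, let `p` be the smallest prime divisor of
`n`, and suppose `G` has a cyclic subgroup `H` of order `n / p`, generated by `h`.
Let `g ∈ G \ H`. Then the sequence consisting of `p - 1` copies of `g` and
`n / p - 1` copies of `h` is one-product free. -/
theorem oneProdFree_replicate {G : Type*} [Group G] [Fintype G]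
    (p : ℕ) (hp : p.Prime) (hpn : p ∣ Fintype.card G)
    (hmin : ∀ q : ℕ, q.Prime → q ∣ Fintype.card G → p ≤ q)
    (H : Subgroup G) (hH : Nat.card H = Fintype.card G / p)
    (h : G) (hgen : Subgroup.zpowers h = H) (g : G) (hg : g ∉ H) :
    OneProdFree
      (Multiset.replicate (p - 1) g + Multiset.replicate (Fintype.card G / p - 1) h) := by
  classical
  rintro ⟨l, hl_ne, hl_le, hl_prod⟩
  have hn0 : 0 < Fintype.card G := Fintype.card_pos
  have hple : p ≤ Fintype.card G := Nat.le_of_dvd hn0 hpn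
  have hnp_pos : 0 < Fintype.card G / p := Nat.div_pos hple hp.pos
  have hhH : h ∈ H := hgen ▸ Subgroup.mem_zpowers h
  have hgh : g ≠ h := fun e => hg (e ▸ hhH)
  -- index of H is p
  have hindex : H.index = p := by
    have h1 : Nat.card H * H.index = Nat.card G := H.card_mul_index
    rw [hH, Nat.card_eq_fintype_card] at h1
    have h2 : Fintype.card G / p * p = Fintype.card G := Nat.div_mul_cancel hpn
    exact Nat.eq_of_mul_eq_mul_left hnp_pos (h1.trans h2.symm)
  haveI hnormal : H.Normal := normal_of_index_eq_min_prime p hp hmin H hindex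
  -- every element of l is g or h
  have hmem : ∀ y ∈ l, y = g ∨ y = h := by
    intro y hy
    have hy' : y ∈ (Multiset.replicate (p - 1) g
        + Multiset.replicate (Fintype.card G / p - 1) h) :=
      Multiset.mem_of_le hl_le (by simpa using hy)
    rcases Multiset.mem_add.mp hy' with h1 | h1
    · exact Or.inl (Multiset.eq_of_mem_replicate h1)
    · exact Or.inr (Multiset.eq_of_mem_replicate h1)
  -- counts
  set a := l.count g with ha_def
  set b := l.count h with hb_def
  have ha_le : a ≤ p - 1 := by
    have := Multiset.count_le_of_le g hl_le
    simpa [Multiset.count_replicate, Ne.symm hgh] using this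
  have hb_le : b ≤ Fintype.card G / p - 1 := by
    have := Multiset.count_le_of_le h hl_le
    simpa [Multiset.count_replicate, hgh] using this
  -- pass to the quotient
  let φ : G →* G ⧸ H := QuotientGroup.mk' H
  have hφg : φ g ≠ 1 := by
    simpa [φ, QuotientGroup.eq_one_iff] using hg
  have hφh : φ h = 1 := by
    simpa [φ, QuotientGroup.eq_one_iff] using hhH
  have hmemφ : ∀ y ∈ l.map φ, y = φ g ∨ y = 1 := by
    intro y hy
    obtain ⟨z, hz, rfl⟩ := List.mem_map.mp hy
    rcases hmem z hz with rfl | rfl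
    · exact Or.inl rfl
    · exact Or.inr hφh
  have hfg_ne : φ g ≠ φ h := by rw [hφh]; exact hφg
  have hcountφ : (l.map φ).count (φ g) = a :=
    count_map_aux φ g h hgh hfg_ne l hmem
  have hprodφ : (φ g) ^ a = 1 := by
    have hmap : (l.map φ).prod = φ l.prod := (MonoidHom.map_list_prod φ l).symm
    rw [hl_prod, map_one] at hmap
    rw [← hcountφ, ← prod_eq_pow_count_aux (φ g) hφg (l.map φ) hmemφ, hmap]
  -- order of φ g is p, hence p ∣ a, hence a = 0
  have hcardQ : Nat.card (G ⧸ H) = p := by rw [← Subgroup.index_eq_card, hindex]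
  have hordφg : orderOf (φ g) = p := by
    have hdvd : orderOf (φ g) ∣ p := hcardQ ▸ orderOf_dvd_natCard (φ g)
    rcases Nat.Prime.eq_one_or_self_of_dvd hp _ hdvd with h1 | h1
    · exact absurd (orderOf_eq_one_iff.mp h1) hφg
    · exact h1
  have hpa : p ∣ a := hordφg ▸ orderOf_dvd_of_pow_eq_one hprodφ
  have ha0 : a = 0 := Nat.eq_zero_of_dvd_of_lt hpa (by have := hp.two_le; omega)
  -- hence every element of l is h
  have hallh : ∀ y ∈ l, y = h := by
    intro y hy
    rcases hmem y hy with rfl | rfl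
    · have : 0 < l.count y := List.count_pos_iff.mpr hy
      omega
    · rfl
  have hlen : l.prod = h ^ l.length := List.prod_eq_pow_card l h hallh
  have hord_h : orderOf h = Fintype.card G / p := by
    rw [← Nat.card_zpowers, hgen, hH]
  have hlen_le : l.length ≤ Fintype.card G / p - 1 := by
    have hlb : l.count h = l.length := List.count_eq_length.mpr (fun y hy => (hallh y hy).symm)
    omega
  have hlen_pos : 0 < l.length := List.length_pos_iff.mpr hl_ne
  have hdvd_len : orderOf h ∣ l.length := orderOf_dvd_of_pow_eq_one (hlen ▸ hl_prod)
  rw [hord_h] at hdvd_len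
  have := Nat.le_of_dvd hlen_pos hdvd_len
  omega
end

section
/- Let G be a finite group of order n, let p be the smallest prime divisor of n, and suppose G has a cyclic subgroup of order n/p. Then the small Davenport constant satisfies d(G) ≥ n/p + p − 2. -/
/-- The small Davenport constant: the maximal length of a one-product free
sequence over `G`. -/
noncomputable def smallDavenport (G : Type*) [Group G] [Fintype G] : ℕ :=
  sSup {n | ∃ S : Multiset G, OneProdFree S ∧ Multiset.card S = n}

/-- Image of a product of a list of `g`s and `h`s under a hom killing `g`. -/
lemma aux_map_prod {G K : Type*} [Group G] [Group K] [DecidableEq G] (φ : G →* K) (g h : G)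
    (hg : φ g = 1) (hgh : g ≠ h) :
    ∀ l : List G, (∀ x ∈ l, x = g ∨ x = h) → φ l.prod = (φ h) ^ (l.count h)
  | [], _ => by simp
  | a :: l, hmem => by
    have hl : ∀ x ∈ l, x = g ∨ x = h := fun x hx => hmem x (List.mem_cons_of_mem a hx)
    have ih := aux_map_prod φ g h hg hgh l hl
    rcases hmem a List.mem_cons_self with rfl | rfl
    · rw [List.prod_cons, map_mul, hg, one_mul, ih, List.count_cons]
      simp [hgh]
    · rw [List.prod_cons, map_mul, ih, List.count_cons]
      simp [pow_succ']

/-- A one-product free sequence has length at most `|G|`. -/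
lemma card_le_of_oneProdFree {G : Type*} [Group G] [Fintype G] (S : Multiset G)
    (hS : OneProdFree S) : Multiset.card S ≤ Fintype.card G := by
  obtain ⟨l, rfl⟩ := Quotient.exists_rep S
  have hS' : OneProdFree (↑l : Multiset G) := hS
  show Multiset.card (↑l : Multiset G) ≤ Fintype.card G
  rw [Multiset.coe_card]
  by_contra hlen
  push_neg at hlen
  have key : ∀ i j : Fin (l.length + 1), (i : ℕ) < (j : ℕ) →
      (l.take i).prod = (l.take j).prod → False := by
    intro i j hlt hfe
    set t := (l.drop i).take (j - i) with ht
    have hsub : t.Sublist l := (List.take_sublist _ _).trans (List.drop_sublist _ _)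
    have hjlen : (j : ℕ) ≤ l.length := Nat.lt_succ_iff.mp j.isLt
    have htlen : t.length = (j : ℕ) - i := by
      rw [ht, List.length_take, List.length_drop]
      omega
    have htne : t ≠ [] := by
      intro h
      rw [h] at htlen
      simp at htlen
      omega
    have htake : l.take j = l.take i ++ t := by
      rw [ht, ← List.take_add]
      congr 1
      omega
    have hprod : t.prod = 1 := by
      have : (l.take i).prod = (l.take i).prod * t.prod := by
        rw [← List.prod_append, ← htake, hfe]
      exact (left_eq_mul.mp this)
    exact hS' ⟨t, htne, Multiset.coe_le.mpr hsub.subperm, hprod⟩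
  have hcard : Fintype.card G < Fintype.card (Fin (l.length + 1)) := by
    simpa using Nat.lt_succ_of_lt hlen
  obtain ⟨i, j, hij, hfe⟩ := Fintype.exists_ne_map_eq_of_card_lt
    (fun i : Fin (l.length + 1) => (l.take i).prod) hcard
  have hne : (i : ℕ) ≠ (j : ℕ) := fun h => hij (Fin.ext h)
  rcases lt_or_gt_of_ne hne with hlt | hlt
  · exact key i j hlt hfe
  · exact key j i hlt hfe.symm

/-- Let `G` be a finite group of order `n`, let `p` be the smallest prime divisor of
`n`, and suppose `G` has a cyclic subgroup of order `n / p`. Then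
`d(G) ≥ n / p + p - 2`. -/
theorem smallDavenport_ge {G : Type*} [Group G] [Fintype G]
    (p : ℕ) (hp : p.Prime) (hpn : p ∣ Fintype.card G)
    (hmin : ∀ q : ℕ, q.Prime → q ∣ Fintype.card G → p ≤ q)
    (H : Subgroup G) (hHcyc : IsCyclic H) (hH : Nat.card H = Fintype.card G / p) :
    Fintype.card G / p + p - 2 ≤ smallDavenport G := by
  classical
  set n := Fintype.card G with hn
  set m := n / p with hmdef
  have hn0 : 0 < n := Fintype.card_pos
  have hmp : m * p = n := Nat.div_mul_cancel hpn
  have hp2 : 2 ≤ p := hp.two_le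
  have hm1 : 1 ≤ m := by
    rcases Nat.eq_zero_or_pos m with h0 | h
    · rw [h0, zero_mul] at hmp; omega
    · exact h
  have hcardG : Nat.card G = n := Nat.card_eq_fintype_card
  -- index of H is p
  have hidx : H.index = p := by
    have h1 : Nat.card H * H.index = Nat.card G := H.card_mul_index
    rw [hH, hcardG] at h1
    have : m * H.index = m * p := by rw [h1, hmp]
    exact Nat.eq_of_mul_eq_mul_left (by omega) this
  -- H is normal (index = smallest prime divisor)
  have hnormal : H.Normal := by
    have hKle : H.normalCore ≤ H := H.normalCore_le
    -- index of normalCore divides p!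
    have hker : H.normalCore = (MulAction.toPermHom G (G ⧸ H)).ker :=
      Subgroup.normalCore_eq_ker H
    have hdvdfac : H.normalCore.index ∣ Nat.factorial p := by
      rw [hker, Subgroup.index_ker]
      have h1 : Nat.card (MulAction.toPermHom G (G ⧸ H)).range ∣
          Nat.card (Equiv.Perm (G ⧸ H)) := Subgroup.card_subgroup_dvd_card _
      have h2 : Nat.card (Equiv.Perm (G ⧸ H)) = Nat.factorial p := by
        rw [Nat.card_eq_fintype_card, Fintype.card_perm, ← Nat.card_eq_fintype_card,
          ← Subgroup.index_eq_card, hidx]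
      exact h2 ▸ h1
    set t := H.normalCore.relIndex H with htdef
    have hti : t * H.index = H.normalCore.index := Subgroup.relIndex_mul_index hKle
    have htfac : t ∣ Nat.factorial (p - 1) := by
      have hfs : Nat.factorial p = p * Nat.factorial (p - 1) :=
        (Nat.mul_factorial_pred (by omega)).symm
      rw [← hti, hidx] at hdvdfac
      rw [hfs, mul_comm t p] at hdvdfac
      exact (mul_dvd_mul_iff_left (by omega : p ≠ 0)).mp hdvdfac
    have htn : t ∣ n := by
      have h1 : t ∣ Nat.card H := Subgroup.index_dvd_card (H.normalCore.subgroupOf H)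
      have h2 : Nat.card H ∣ n := by
        rw [← hcardG]; exact Subgroup.card_subgroup_dvd_card H
      exact h1.trans h2
    have ht1 : t = 1 := by
      by_contra ht1
      have ht0 : t ≠ 0 := by
        intro h0
        rw [h0] at htfac
        exact Nat.factorial_pos (p - 1) |>.ne' (Nat.eq_zero_of_zero_dvd htfac)
      have hq : t.minFac.Prime := Nat.minFac_prime ht1
      have hq1 : t.minFac ∣ Nat.factorial (p - 1) := (Nat.minFac_dvd t).trans htfac
      have hq2 : t.minFac ≤ p - 1 := (Nat.Prime.dvd_factorial hq).mp hq1
      have hq3 : p ≤ t.minFac := hmin _ hq ((Nat.minFac_dvd t).trans htn)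
      omega
    have hHle : H ≤ H.normalCore := Subgroup.relIndex_eq_one.mp ht1
    have : H.normalCore = H := le_antisymm hKle hHle
    rw [← this]; infer_instance
  haveI := hnormal
  -- generator of H
  obtain ⟨g₀, hg₀⟩ := hHcyc.exists_generator
  set g : G := (g₀ : G) with hgdef
  have hgmem : g ∈ H := g₀.2
  have horderg : orderOf g = m := by
    have h1 : orderOf g₀ = Nat.card H := orderOf_eq_card_of_forall_mem_zpowers hg₀
    have h2 : orderOf g = orderOf g₀ := (orderOf_injective H.subtype Subtype.val_injective g₀)
    rw [h2, h1, hH]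
  -- element outside H
  have hmn : m < n := by
    have h2 := Nat.mul_le_mul_left m hp2
    omega
  have hHne : H ≠ ⊤ := by
    intro htop
    rw [htop] at hH
    have : Nat.card (⊤ : Subgroup G) = n := by
      rw [Subgroup.card_top, hcardG]
    omega
  obtain ⟨h, hh⟩ : ∃ h : G, h ∉ H := by
    by_contra hc
    push_neg at hc
    exact hHne ((Subgroup.eq_top_iff' H).mpr hc)
  have hgh : g ≠ h := fun he => hh (he ▸ hgmem)
  -- the sequence
  set S : Multiset G := Multiset.replicate (m - 1) g + Multiset.replicate (p - 1) h with hSdef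
  have hScard : Multiset.card S = (m - 1) + (p - 1) := by
    simp [hSdef]
  -- one-product free
  have hfree : OneProdFree S := by
    rintro ⟨l, hlne, hle, hprod⟩
    have hmem : ∀ x ∈ l, x = g ∨ x = h := by
      intro x hx
      have : x ∈ S := Multiset.mem_of_le hle (by simpa using hx)
      rw [hSdef, Multiset.mem_add] at this
      rcases this with h1 | h1
      · exact Or.inl (Multiset.eq_of_mem_replicate h1)
      · exact Or.inr (Multiset.eq_of_mem_replicate h1)
    have hcg : l.count g ≤ m - 1 := by
      have := Multiset.count_le_of_le g hle
      rwa [hSdef, Multiset.count_add, Multiset.count_replicate, Multiset.count_replicate,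
        if_pos rfl, if_neg (Ne.symm hgh), add_zero, Multiset.coe_count] at this
    have hch : l.count h ≤ p - 1 := by
      have := Multiset.count_le_of_le h hle
      rwa [hSdef, Multiset.count_add, Multiset.count_replicate, Multiset.count_replicate,
        if_neg hgh, if_pos rfl, zero_add, Multiset.coe_count] at this
    by_cases hb : l.count h = 0
    · -- all terms equal g
      have hall : ∀ x ∈ l, x = g := by
        intro x hx
        rcases hmem x hx with h1 | h1
        · exact h1
        · exact absurd (List.count_pos_iff.mpr (h1 ▸ hx)) (by omega)
      have hprodg : l.prod = g ^ l.length := List.prod_eq_pow_card l g hall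
      have hleng : l.length = l.count g := (List.count_eq_length.mpr
        (fun b hb => (hall b hb).symm)).symm
      have hlen1 : 1 ≤ l.length := List.length_pos_iff.mpr hlne
      have hdvd : m ∣ l.length := by
        rw [← horderg]
        exact orderOf_dvd_of_pow_eq_one (hprodg ▸ hprod)
      have := Nat.le_of_dvd (by omega) hdvd
      omega
    · -- pass to the quotient G ⧸ H
      set φ := QuotientGroup.mk' H with hφ
      have hφg : φ g = 1 := (QuotientGroup.eq_one_iff g).mpr hgmem
      have hφh : φ h ≠ 1 := fun he => hh ((QuotientGroup.eq_one_iff h).mp he)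
      have hmap : φ l.prod = (φ h) ^ (l.count h) :=
        aux_map_prod φ g h hφg hgh l hmem
      have hone : (φ h) ^ (l.count h) = 1 := by
        rw [← hmap, hprod, map_one]
      have hcardQ : Nat.card (G ⧸ H) = p := by
        rw [← Subgroup.index_eq_card, hidx]
      have hod : orderOf (φ h) = p := by
        have h1 : orderOf (φ h) ∣ p := hcardQ ▸ orderOf_dvd_natCard (φ h)
        rcases (Nat.Prime.eq_one_or_self_of_dvd hp _ h1) with h2 | h2
        · exact absurd (orderOf_eq_one_iff.mp h2) hφh
        · exact h2
      have hpb : p ∣ l.count h := hod ▸ orderOf_dvd_of_pow_eq_one hone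
      have := Nat.le_of_dvd (by omega) hpb
      omega
  -- conclude
  have hmem : (m - 1) + (p - 1) ∈
      {k | ∃ S : Multiset G, OneProdFree S ∧ Multiset.card S = k} :=
    ⟨S, hfree, hScard⟩
  have hbdd : BddAbove {k | ∃ S : Multiset G, OneProdFree S ∧ Multiset.card S = k} := by
    refine ⟨Fintype.card G, ?_⟩
    rintro k ⟨T, hT, rfl⟩
    exact card_le_of_oneProdFree T hT
  have hle := le_csSup hbdd hmem
  have : m + p - 2 = (m - 1) + (p - 1) := by omega
  rw [smallDavenport]
  omega
end
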